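/- Let K̃ be a positive integer, δ ∈ (0,1), and let S be a finite set of at most K̃ values. Let τ' = ⌈4·log₂(K̃/δ)⌉ and let h_1, …, h_{τ'} be random functions from the values to the bins {0,…,8K̃−1} such that the τ' functions are mutually independent and each h_a is pairwise independent with uniformly distributed values. Fix any value k ∉ S. Then the probability that in at least τ'/2 of the τ' arrays the bin h_a(k) contains an element of S (i.e., ∃ j ∈ S with h_a(j) = h_a(k)) is at most (δ/K̃)². Hence for any set A of at most K̃·log₂(K̃/δ) candidate values disjoint from S, the probability that some candidate in A has a nonempty bin in at least half of the arrays is at most K̃·log₂(K̃/δ)·(δ/K̃)². -/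

import Mathlib

open MeasureTheory ProbabilityTheory
open scoped ENNReal Classical

private lemma choose_le_two_pow' (n k : ℕ) : n.choose k ≤ 2 ^ n := by
  rcases le_or_gt k n with hk | hk
  · calc n.choose k ≤ ∑ i ∈ Finset.range (n+1), n.choose i :=
        Finset.single_le_sum (fun i _ => Nat.zero_le _) (Finset.mem_range.2 (Nat.lt_succ_of_le hk))
    _ = 2 ^ n := Nat.sum_range_choose n
  · simp [Nat.choose_eq_zero_of_lt hk]

/-- **False positives in Non-strict FRS.**
With `τ' = ⌈4·log₂(K̃/δ)⌉` arrays of `8K̃` bins and mutually independent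
pairwise-independent uniform hash functions: for any fixed value `k ∉ S`, the
probability that in at least `τ'/2` of the arrays the bin `h a k` contains an
element of `S` is at most `(δ/K̃)²`; hence for any set `A` of at most
`K̃·log₂(K̃/δ)` candidate values disjoint from `S`, the probability that some
candidate in `A` has a nonempty bin in at least half of the arrays is at most
`K̃·log₂(K̃/δ)·(δ/K̃)²`. -/
theorem frs_nonstrict_false_positive_bound
    {Ω : Type*} [MeasurableSpace Ω] (μ : Measure Ω) [IsProbabilityMeasure μ]
    {ι : Type*} (Ktil : ℕ) (hK : 0 < Ktil) (δ : ℝ) (hδ : δ ∈ Set.Ioo (0 : ℝ) 1)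
    (S : Finset ι) (hS : S.card ≤ Ktil)
    (τ' : ℕ) (hτ : τ' = ⌈4 * Real.logb 2 ((Ktil : ℝ) / δ)⌉₊)
    (h : Fin τ' → ι → Ω → ℕ)
    (hmeas : ∀ a x, Measurable (h a x))
    (hrange : ∀ a x ω, h a x ω < 8 * Ktil)
    -- the τ' random functions are mutually independent
    (hindep : iIndepFun
      (fun (a : Fin τ') (ω : Ω) => (fun x : ι => h a x ω)) μ)
    -- each function is uniform on the bins
    (hunif : ∀ a x, ∀ v < 8 * Ktil,
      μ {ω | h a x ω = v} = (((8 * Ktil : ℕ) : ℝ≥0∞))⁻¹)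
    -- and pairwise independent
    (hpair : ∀ (a : Fin τ') (x y : ι), x ≠ y → ∀ v w, v < 8 * Ktil → w < 8 * Ktil →
      μ {ω | h a x ω = v ∧ h a y ω = w} =
        (((8 * Ktil : ℕ) : ℝ≥0∞))⁻¹ * (((8 * Ktil : ℕ) : ℝ≥0∞))⁻¹) :
    (∀ k ∉ S,
      μ {ω | ((τ' : ℝ) / 2) ≤
          ((Finset.univ.filter fun a : Fin τ' =>
            ∃ j ∈ S, h a j ω = h a k ω).card : ℝ)} ≤
        ENNReal.ofReal ((δ / Ktil) ^ 2)) ∧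
    (∀ A : Finset ι, Disjoint A S →
      (A.card : ℝ) ≤ (Ktil : ℝ) * Real.logb 2 ((Ktil : ℝ) / δ) →
      μ {ω | ∃ k ∈ A, ((τ' : ℝ) / 2) ≤
          ((Finset.univ.filter fun a : Fin τ' =>
            ∃ j ∈ S, h a j ω = h a k ω).card : ℝ)} ≤
        ENNReal.ofReal ((Ktil : ℝ) * Real.logb 2 ((Ktil : ℝ) / δ) * (δ / Ktil) ^ 2)) := by
  obtain ⟨hδ0, hδ1⟩ := hδ
  set L : ℝ := Real.logb 2 ((Ktil : ℝ) / δ) with hLdef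
  have hKpos : (0 : ℝ) < Ktil := by exact_mod_cast hK
  have hKδ1 : (1 : ℝ) < (Ktil : ℝ) / δ := by
    rw [lt_div_iff₀ hδ0]
    calc (1 : ℝ) * δ = δ := one_mul δ
    _ < 1 := hδ1
    _ ≤ Ktil := by exact_mod_cast hK
  have hL0 : 0 < L := Real.logb_pos one_lt_two hKδ1
  set m : ℕ := (τ' + 1) / 2 with hmdef
  set n8 : ℕ := 8 * Ktil with hn8
  have hn8pos : 0 < n8 := by positivity
  have hn8ne : ((n8 : ℕ) : ℝ≥0∞) ≠ 0 := by exact_mod_cast hn8pos.ne'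
  have hn8top : ((n8 : ℕ) : ℝ≥0∞) ≠ ⊤ := ENNReal.natCast_ne_top n8
  -- τ' ≥ 4L
  have hτL : 4 * L ≤ (τ' : ℝ) := by rw [hτ]; exact Nat.le_ceil _
  have h2m : τ' ≤ 2 * m := by omega
  -- Part 1
  have key : ∀ k ∉ S,
      μ {ω | ((τ' : ℝ) / 2) ≤
          ((Finset.univ.filter fun a : Fin τ' =>
            ∃ j ∈ S, h a j ω = h a k ω).card : ℝ)} ≤
        ENNReal.ofReal ((δ / Ktil) ^ 2) := by
    intro k hk
    set B : Fin τ' → Set Ω := fun a => {ω | ∃ j ∈ S, h a j ω = h a k ω} with hB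
    -- each B a has measure ≤ 1/8
    have hBle : ∀ a, μ (B a) ≤ 8⁻¹ := by
      intro a
      have hCeq : ∀ j ∈ S, μ {ω | h a j ω = h a k ω} = ((n8 : ℕ) : ℝ≥0∞)⁻¹ := by
        intro j hj
        have hjk : j ≠ k := fun hjk => hk (hjk ▸ hj)
        have hset : {ω | h a j ω = h a k ω}
            = ⋃ v ∈ Finset.range n8, {ω | h a j ω = v ∧ h a k ω = v} := by
          ext ω
          simp only [Set.mem_setOf_eq, Set.mem_iUnion, Finset.mem_range]
          constructor
          · intro hω; exact ⟨h a j ω, hrange a j ω, rfl, hω.symm⟩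
          · rintro ⟨v, _, h1, h2⟩; rw [h1, h2]
        rw [hset, measure_biUnion_finset]
        · rw [Finset.sum_congr rfl (fun v hv => hpair a j k hjk v v
            (Finset.mem_range.1 hv) (Finset.mem_range.1 hv))]
          rw [Finset.sum_const, Finset.card_range, nsmul_eq_mul, ← mul_assoc,
            ENNReal.mul_inv_cancel hn8ne hn8top, one_mul]
        · intro v hv w hw hvw
          simp only [Function.onFun, Set.disjoint_left]
          rintro ω ⟨h1, _⟩ ⟨h2, _⟩
          exact hvw (h1 ▸ h2 ▸ rfl)
        · intro v hv
          exact ((hmeas a j) (measurableSet_singleton v)).inter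
            ((hmeas a k) (measurableSet_singleton v))
      have hsub : B a ⊆ ⋃ j ∈ S, {ω | h a j ω = h a k ω} := by
        rintro ω ⟨j, hj, hω⟩
        exact Set.mem_biUnion hj hω
      calc μ (B a) ≤ μ (⋃ j ∈ S, {ω | h a j ω = h a k ω}) := measure_mono hsub
        _ ≤ ∑ j ∈ S, μ {ω | h a j ω = h a k ω} := measure_biUnion_finset_le S _
        _ = S.card * ((n8 : ℕ) : ℝ≥0∞)⁻¹ := by
            rw [Finset.sum_congr rfl hCeq, Finset.sum_const, nsmul_eq_mul]
        _ ≤ Ktil * ((n8 : ℕ) : ℝ≥0∞)⁻¹ := by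
            have hc : (S.card : ℝ≥0∞) ≤ (Ktil : ℝ≥0∞) := by exact_mod_cast hS
            exact mul_le_mul_left hc _
        _ = 8⁻¹ := by
            have hcast : ((n8 : ℕ) : ℝ≥0∞) = 8 * (Ktil : ℝ≥0∞) := by
              rw [hn8]; push_cast; ring
            rw [hcast, ENNReal.mul_inv (Or.inl (by norm_num)) (Or.inl (by norm_num)),
              mul_comm ((8 : ℝ≥0∞))⁻¹, ← mul_assoc,
              ENNReal.mul_inv_cancel (by exact_mod_cast hK.ne') (ENNReal.natCast_ne_top Ktil),
              one_mul]
    -- B a is comap-measurable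
    have hBcomap : ∀ a, MeasurableSet[MeasurableSpace.comap
        (fun ω : Ω => (fun x : ι => h a x ω)) inferInstance] (B a) := by
      intro a
      refine ⟨⋃ j ∈ (S : Set ι), {f : ι → ℕ | f j = f k}, ?_, ?_⟩
      · refine MeasurableSet.biUnion S.countable_toSet (fun j _ => ?_)
        have : {f : ι → ℕ | f j = f k} = ⋃ v : ℕ, ((fun f : ι → ℕ => f j) ⁻¹' {v}
            ∩ (fun f : ι → ℕ => f k) ⁻¹' {v}) := by
          ext f
          simp only [Set.mem_setOf_eq, Set.mem_iUnion, Set.mem_inter_iff, Set.mem_preimage,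
            Set.mem_singleton_iff]
          exact ⟨fun hf => ⟨f j, rfl, hf.symm⟩, fun ⟨v, h1, h2⟩ => h1.trans h2.symm⟩
        rw [this]
        exact MeasurableSet.iUnion fun v =>
          ((measurable_pi_apply j) (measurableSet_singleton v)).inter
            ((measurable_pi_apply k) (measurableSet_singleton v))
      · ext ω
        simp [B, Set.mem_iUnion]
    -- product formula
    have hprod : ∀ T : Finset (Fin τ'), μ (⋂ a ∈ T, B a) = ∏ a ∈ T, μ (B a) :=
      fun T => hindep.meas_biInter (fun a _ => hBcomap a)
    -- inclusion into union over subsets of size m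
    have hsub : {ω | ((τ' : ℝ) / 2) ≤
          ((Finset.univ.filter fun a : Fin τ' =>
            ∃ j ∈ S, h a j ω = h a k ω).card : ℝ)}
        ⊆ ⋃ T ∈ Finset.univ.powersetCard m, ⋂ a ∈ T, B a := by
      intro ω hω
      simp only [Set.mem_setOf_eq] at hω
      set N := Finset.univ.filter fun a : Fin τ' => ∃ j ∈ S, h a j ω = h a k ω with hN
      have hτN : τ' ≤ 2 * N.card := by
        have : (τ' : ℝ) ≤ 2 * N.card := by linarith
        exact_mod_cast this
      have hmN : m ≤ N.card := by omega
      obtain ⟨T, hTN, hTcard⟩ := Finset.exists_subset_card_eq hmN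
      refine Set.mem_iUnion₂.2 ⟨T, Finset.mem_powersetCard.2
        ⟨Finset.subset_univ T, hTcard⟩, ?_⟩
      refine Set.mem_iInter₂.2 fun a ha => ?_
      have := hTN ha
      rw [hN, Finset.mem_filter] at this
      exact this.2
    -- measure bound
    have hnum : μ {ω | ((τ' : ℝ) / 2) ≤
          ((Finset.univ.filter fun a : Fin τ' =>
            ∃ j ∈ S, h a j ω = h a k ω).card : ℝ)}
        ≤ (τ'.choose m : ℝ≥0∞) * (8⁻¹ : ℝ≥0∞) ^ m := by
      calc μ _ ≤ μ (⋃ T ∈ Finset.univ.powersetCard m, ⋂ a ∈ T, B a) := measure_mono hsub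
        _ ≤ ∑ T ∈ Finset.univ.powersetCard m, μ (⋂ a ∈ T, B a) :=
            measure_biUnion_finset_le _ _
        _ ≤ ∑ T ∈ Finset.univ.powersetCard m, (8⁻¹ : ℝ≥0∞) ^ m := by
            refine Finset.sum_le_sum fun T hT => ?_
            rw [hprod T]
            have hTcard : T.card = m := (Finset.mem_powersetCard.1 hT).2
            calc ∏ a ∈ T, μ (B a) ≤ ∏ a ∈ T, (8⁻¹ : ℝ≥0∞) :=
                Finset.prod_le_prod' fun a _ => hBle a
              _ = (8⁻¹ : ℝ≥0∞) ^ m := by rw [Finset.prod_const, hTcard]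
        _ = (τ'.choose m : ℝ≥0∞) * (8⁻¹ : ℝ≥0∞) ^ m := by
            rw [Finset.sum_const, Finset.card_powersetCard, Finset.card_univ,
              Fintype.card_fin, nsmul_eq_mul]
    -- numeric bound
    refine hnum.trans ?_
    have h8 : (8⁻¹ : ℝ≥0∞) ^ m = ENNReal.ofReal ((8⁻¹ : ℝ) ^ m) := by
      rw [ENNReal.ofReal_pow (by norm_num)]
      congr 1
      rw [ENNReal.ofReal_inv_of_pos (by norm_num)]
      norm_num
    rw [h8, ← ENNReal.ofReal_natCast, ← ENNReal.ofReal_mul (by positivity)]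
    refine ENNReal.ofReal_le_ofReal ?_
    -- real inequality
    have hchoose : (τ'.choose m : ℝ) ≤ 2 ^ τ' := by exact_mod_cast choose_le_two_pow' τ' m
    have hmain : (2 : ℝ) ^ τ' * (8⁻¹ : ℝ) ^ m ≤ (δ / Ktil) ^ 2 := by
      have h8m : ((8 : ℝ)) ^ m = (2 : ℝ) ^ ((3 : ℝ) * m) := by
        rw [show (8 : ℝ) = 2 ^ (3 : ℕ) by norm_num, ← pow_mul,
          ← Real.rpow_natCast (2 : ℝ) (3 * m)]
        push_cast; ring_nf
      have h1 : (2 : ℝ) ^ τ' * (8⁻¹ : ℝ) ^ m = (2 : ℝ) ^ ((τ' : ℝ) - 3 * m) := by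
        rw [inv_pow, h8m, ← Real.rpow_neg (by norm_num), ← Real.rpow_natCast (2 : ℝ) τ',
          ← Real.rpow_add two_pos]
        ring_nf
      have h2 : (δ / (Ktil : ℝ)) ^ 2 = (2 : ℝ) ^ (-L * 2) := by
        have hKδ : δ / (Ktil : ℝ) = (2 : ℝ) ^ (-L) := by
          rw [Real.rpow_neg (by norm_num), hLdef,
            Real.rpow_logb two_pos (by norm_num) (by positivity), inv_div]
        rw [hKδ, ← Real.rpow_natCast ((2:ℝ) ^ (-L)) 2, ← Real.rpow_mul (by norm_num)]
        norm_num
      rw [h1, h2]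
      apply Real.rpow_le_rpow_of_exponent_le one_le_two
      have h2m' : (τ' : ℝ) ≤ 2 * m := by exact_mod_cast h2m
      linarith
    calc (τ'.choose m : ℝ) * (8⁻¹ : ℝ) ^ m ≤ 2 ^ τ' * (8⁻¹ : ℝ) ^ m := by
          gcongr
      _ ≤ (δ / Ktil) ^ 2 := hmain
  refine ⟨key, ?_⟩
  intro A hA hAcard
  have hsub : {ω | ∃ k ∈ A, ((τ' : ℝ) / 2) ≤
          ((Finset.univ.filter fun a : Fin τ' =>
            ∃ j ∈ S, h a j ω = h a k ω).card : ℝ)}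
      = ⋃ k ∈ A, {ω | ((τ' : ℝ) / 2) ≤
          ((Finset.univ.filter fun a : Fin τ' =>
            ∃ j ∈ S, h a j ω = h a k ω).card : ℝ)} := by
    ext ω; simp
  rw [hsub]
  calc μ _ ≤ ∑ k ∈ A, μ {ω | ((τ' : ℝ) / 2) ≤
          ((Finset.univ.filter fun a : Fin τ' =>
            ∃ j ∈ S, h a j ω = h a k ω).card : ℝ)} := measure_biUnion_finset_le A _
    _ ≤ ∑ k ∈ A, ENNReal.ofReal ((δ / Ktil) ^ 2) :=
        Finset.sum_le_sum fun k hkA => key k (Finset.disjoint_left.1 hA hkA)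
    _ = A.card * ENNReal.ofReal ((δ / Ktil) ^ 2) := by
        rw [Finset.sum_const, nsmul_eq_mul]
    _ ≤ ENNReal.ofReal ((Ktil : ℝ) * L * (δ / Ktil) ^ 2) := by
        rw [← ENNReal.ofReal_natCast, ← ENNReal.ofReal_mul (by positivity)]
        exact ENNReal.ofReal_le_ofReal
          (mul_le_mul_of_nonneg_right hAcard (by positivity))
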